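/- Vertical composition of R-algebra morphisms: if (u,v): (f,s) ⇒ (h,s') and (v,w): (g,t) ⇒ (k,t') are morphisms of R-algebras with cod f = dom g and cod h = dom k, then (u,w): (gf, t•s) ⇒ (kh, t'•s') is a morphism of R-algebras, where • denotes the canonical composition of algebra structures in an awfs. -/
import Mathlib


open CategoryTheory

universe v u

/-- A functorial factorization on `M`: every arrow `f` factors as `r f ∘ l f`,
functorially in commutative squares. -/
structure FunctFact (M : Type u) [Category.{v} M] where
  E : ∀ {X Y : M}, (X ⟶ Y) → M
  l : ∀ {X Y : M} (f : X ⟶ Y), X ⟶ E f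
  r : ∀ {X Y : M} (f : X ⟶ Y), E f ⟶ Y
  fact : ∀ {X Y : M} (f : X ⟶ Y), l f ≫ r f = f
  map : ∀ {X Y X' Y' : M} {f : X ⟶ Y} {g : X' ⟶ Y'} (u : X ⟶ X') (v : Y ⟶ Y'),
    f ≫ v = u ≫ g → (E f ⟶ E g)
  map_l : ∀ {X Y X' Y' : M} {f : X ⟶ Y} {g : X' ⟶ Y'} (u : X ⟶ X') (v : Y ⟶ Y')
    (h : f ≫ v = u ≫ g), l f ≫ map u v h = u ≫ l g
  map_r : ∀ {X Y X' Y' : M} {f : X ⟶ Y} {g : X' ⟶ Y'} (u : X ⟶ X') (v : Y ⟶ Y')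
    (h : f ≫ v = u ≫ g), r f ≫ v = map u v h ≫ r g
  map_id : ∀ {X Y : M} (f : X ⟶ Y), map (𝟙 X) (𝟙 Y) (by simp) = 𝟙 (E f)
  map_comp : ∀ {X Y X' Y' X'' Y'' : M} {f : X ⟶ Y} {g : X' ⟶ Y'} {h : X'' ⟶ Y''}
    (u : X ⟶ X') (v : Y ⟶ Y') (u' : X' ⟶ X'') (v' : Y' ⟶ Y'')
    (h₁ : f ≫ v = u ≫ g) (h₂ : g ≫ v' = u' ≫ h),
    map (u ≫ u') (v ≫ v')
      (by rw [← Category.assoc, h₁, Category.assoc, h₂, ← Category.assoc]) =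
      map u v h₁ ≫ map u' v' h₂

/-- An algebraic weak factorization system on `M`: a functorial factorization whose
left functor underlies a comonad (comultiplication `δ`) and whose right functor
underlies a monad (multiplication `μ`), subject to the distributive law. -/
structure AWFS (M : Type u) [Category.{v} M] extends FunctFact M where
  δ : ∀ {X Y : M} (f : X ⟶ Y), E f ⟶ E (l f)
  μ : ∀ {X Y : M} (f : X ⟶ Y), E (r f) ⟶ E f
  l_δ : ∀ {X Y : M} (f : X ⟶ Y), l f ≫ δ f = l (l f)
  δ_r : ∀ {X Y : M} (f : X ⟶ Y), δ f ≫ r (l f) = 𝟙 (E f)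
  l_μ : ∀ {X Y : M} (f : X ⟶ Y), l (r f) ≫ μ f = 𝟙 (E f)
  μ_r : ∀ {X Y : M} (f : X ⟶ Y), μ f ≫ r f = r (r f)
  δ_nat : ∀ {X Y X' Y' : M} {f : X ⟶ Y} {g : X' ⟶ Y'} (u : X ⟶ X') (v : Y ⟶ Y')
    (h : f ≫ v = u ≫ g),
    δ f ≫ map u (map u v h) (map_l u v h) = map u v h ≫ δ g
  μ_nat : ∀ {X Y X' Y' : M} {f : X ⟶ Y} {g : X' ⟶ Y'} (u : X ⟶ X') (v : Y ⟶ Y')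
    (h : f ≫ v = u ≫ g),
    μ f ≫ map u v h = map (map u v h) v (map_r u v h) ≫ μ g
  δ_coassoc : ∀ {X Y : M} (f : X ⟶ Y) (pf : l f ≫ δ f = 𝟙 X ≫ l (l f)),
    δ f ≫ δ (l f) = δ f ≫ map (𝟙 X) (δ f) pf
  μ_assoc : ∀ {X Y : M} (f : X ⟶ Y) (pf : r (r f) ≫ 𝟙 Y = μ f ≫ r f),
    μ (r f) ≫ μ f = map (μ f) (𝟙 Y) pf ≫ μ f
  distrib : ∀ {X Y : M} (f : X ⟶ Y) (pf : l (r f) ≫ μ f = δ f ≫ r (l f)),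
    μ f ≫ δ f = δ (r f) ≫ map (δ f) (μ f) pf ≫ μ (l f)

/-- The canonical algebra structure `t • s` on a composite `f ≫ g` of two
`R`-algebras `(f, s)` and `(g, t)`: `t • s = s ∘ E(1, t ∘ E(f,1)) ∘ δ_{gf}`. -/
def AWFS.comp {M : Type u} [Category.{v} M] (F : AWFS M) {X Y Z : M}
    (f : X ⟶ Y) (g : Y ⟶ Z) (s : F.E f ⟶ X) (t : F.E g ⟶ Y)
    (ht : F.l g ≫ t = 𝟙 Y) : F.E (f ≫ g) ⟶ X :=
  F.δ (f ≫ g) ≫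
    F.map (𝟙 X) (F.map f (𝟙 Z) (by simp) ≫ t)
      (by rw [← Category.assoc, F.map_l, Category.assoc, ht, Category.comp_id,
            Category.id_comp]) ≫ s

theorem FunctFact.map_congr {M : Type u} [Category.{v} M] (F : FunctFact M)
    {X Y X' Y' : M} {f : X ⟶ Y} {g : X' ⟶ Y'} {u u' : X ⟶ X'} {v v' : Y ⟶ Y'}
    (hu : u = u') (hv : v = v') (p : f ≫ v = u ≫ g) (p' : f ≫ v' = u' ≫ g) :
    F.map u v p = F.map u' v' p' := by subst hu; subst hv; rfl

/-- Vertical composition of `R`-algebra morphisms: if `(u,v) : (f,s) ⇒ (h,s')` and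
`(v,w) : (g,t) ⇒ (k,t')` are morphisms of `R`-algebras, then
`(u,w) : (g ∘ f, t • s) ⇒ (k ∘ h, t' • s')` is a morphism of `R`-algebras. -/
theorem stmt9 {M : Type u} [Category.{v} M] (F : AWFS M)
    {X Y Z X' Y' Z' : M}
    (f : X ⟶ Y) (g : Y ⟶ Z) (h : X' ⟶ Y') (k : Y' ⟶ Z')
    (s : F.E f ⟶ X) (t : F.E g ⟶ Y) (s' : F.E h ⟶ X') (t' : F.E k ⟶ Y')
    (hs1 : F.l f ≫ s = 𝟙 X) (hs2 : s ≫ f = F.r f)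
    (ht1 : F.l g ≫ t = 𝟙 Y) (ht2 : t ≫ g = F.r g)
    (hs'1 : F.l h ≫ s' = 𝟙 X') (hs'2 : s' ≫ h = F.r h)
    (ht'1 : F.l k ≫ t' = 𝟙 Y') (ht'2 : t' ≫ k = F.r k)
    (u : X ⟶ X') (v : Y ⟶ Y') (w : Z ⟶ Z')
    (sq1 : f ≫ v = u ≫ h) (sq2 : g ≫ w = v ≫ k)
    (hmor1 : F.map u v sq1 ≫ s' = s ≫ u)
    (hmor2 : F.map v w sq2 ≫ t' = t ≫ v) :
    ∀ (sq3 : (f ≫ g) ≫ w = u ≫ (h ≫ k)),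
      F.map u w sq3 ≫ F.comp h k s' t' ht'1 = F.comp f g s t ht1 ≫ u := by
  intro sq3
  unfold AWFS.comp
  have key : F.map u w sq3 ≫ F.map h (𝟙 Z') (by simp) ≫ t'
      = F.map f (𝟙 Z) (by simp) ≫ t ≫ v := by
    rw [← Category.assoc, ← F.map_comp u w h (𝟙 Z') sq3 (by simp),
      F.map_congr sq1.symm (by simp : w ≫ 𝟙 Z' = 𝟙 Z ≫ w) _ (by simp [sq2]),
      F.map_comp f (𝟙 Z) v w (by simp) sq2, Category.assoc, hmor2]
  have step1 : F.map u w sq3 ≫ F.δ (h ≫ k)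
      = F.δ (f ≫ g) ≫ F.map u (F.map u w sq3) (F.map_l u w sq3) :=
    (F.δ_nat u w sq3).symm
  have main : F.map u (F.map u w sq3) (F.map_l u w sq3) ≫
      F.map (𝟙 X') (F.map h (𝟙 Z') (by simp) ≫ t')
        (by rw [← Category.assoc, F.map_l, Category.assoc, ht'1,
              Category.comp_id, Category.id_comp]) =
      F.map (𝟙 X) (F.map f (𝟙 Z) (by simp) ≫ t)
        (by rw [← Category.assoc, F.map_l, Category.assoc, ht1,
              Category.comp_id, Category.id_comp]) ≫ F.map u v sq1 := by
    rw [← F.map_comp u (F.map u w sq3) (𝟙 X') (F.map h (𝟙 Z') (by simp) ≫ t')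
        (F.map_l u w sq3)
        (by rw [← Category.assoc, F.map_l, Category.assoc, ht'1,
              Category.comp_id, Category.id_comp]),
      F.map_congr (by simp : u ≫ 𝟙 X' = 𝟙 X ≫ u)
        (show F.map u w sq3 ≫ F.map h (𝟙 Z') (by simp) ≫ t'
            = (F.map f (𝟙 Z) (by simp) ≫ t) ≫ v by
              rw [key]; exact (Category.assoc _ _ _).symm) _
        (by simp only [← Category.assoc]; rw [F.map_l, Category.assoc f, ht1]
            simp [sq1]),
      F.map_comp (𝟙 X) (F.map f (𝟙 Z) (by simp) ≫ t) u v
        (by rw [← Category.assoc, F.map_l, Category.assoc, ht1,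
              Category.comp_id, Category.id_comp]) sq1]
  rw [← Category.assoc, step1, Category.assoc, ← Category.assoc (F.map u _ _), main]
  simp only [Category.assoc]
  rw [hmor1]
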